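/- arXiv:1501.01123 — 4 statements merged into one kernel-verified Lean document; each statement's English description precedes it below -/
import Mathlib

section
/- For every smooth p-form Θ on M and all smooth vector fields X_1,…,X_{p+1}, the generalized first structure equation holds: T_Θ(X_1,…,X_{p+1}) = dΘ(X_1,…,X_{p+1}) + Ξ_Θ(X_1,…,X_{p+1}). -/
open scoped Manifold

local notation "∞" => (⊤ : ℕ∞)

noncomputable section

variable {E : Type*} [NormedAddCommGroup E] [NormedSpace ℝ E]
  {H : Type*} [TopologicalSpace H]

/-- A linear connection on the smooth manifold `M`, given as an operator on global smooth
vector fields (realised as derivations of the algebra `C^∞(M)` of smooth real-valued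
functions) which is ℝ-bilinear, `C^∞(M)`-linear in its first argument and satisfies the
Leibniz rule `∇_X (f • Y) = X f • Y + f • ∇_X Y` in its second argument. -/
structure LinearConnection (I : ModelWithCorners ℝ E H) (M : Type*) [TopologicalSpace M]
    [ChartedSpace H M] [IsManifold I ∞ M] where
  cov : Derivation ℝ C^∞⟮I, M; ℝ⟯ C^∞⟮I, M; ℝ⟯ →
        Derivation ℝ C^∞⟮I, M; ℝ⟯ C^∞⟮I, M; ℝ⟯ →
        Derivation ℝ C^∞⟮I, M; ℝ⟯ C^∞⟮I, M; ℝ⟯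
  add_left : ∀ X X' Y, cov (X + X') Y = cov X Y + cov X' Y
  smul_real_left : ∀ (r : ℝ) (X Y), cov (r • X) Y = r • cov X Y
  smul_smooth_left : ∀ (f : C^∞⟮I, M; ℝ⟯) (X Y), cov (f • X) Y = f • cov X Y
  add_right : ∀ X Y Y', cov X (Y + Y') = cov X Y + cov X Y'
  smul_real_right : ∀ (r : ℝ) (X Y), cov X (r • Y) = r • cov X Y
  leibniz : ∀ (f : C^∞⟮I, M; ℝ⟯) (X Y), cov X (f • Y) = X f • Y + f • cov X Y

variable {I : ModelWithCorners ℝ E H}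
  {M : Type*} [TopologicalSpace M] [ChartedSpace H M] [IsManifold I ∞ M]

/-- Smooth real-valued functions on `M`. -/
local notation "Cinf" => C^∞⟮I, M; ℝ⟯
/-- Smooth global vector fields on `M`, as derivations of `C^∞(M)`. -/
local notation "VF" => Derivation ℝ C^∞⟮I, M; ℝ⟯ C^∞⟮I, M; ℝ⟯

namespace LinearConnection

variable (nab : LinearConnection I M)

/-- The torsion `T(X,Y) := ∇_X Y − ∇_Y X − [X,Y]` of a linear connection. -/
def torsion (X Y : VF) : VF := nab.cov X Y - nab.cov Y X - ⁅X, Y⁆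

/-- The curvature `R(X,Y)Z := ∇_X ∇_Y Z − ∇_Y ∇_X Z − ∇_{[X,Y]} Z` of a linear connection. -/
def curv (X Y Z : VF) : VF :=
  nab.cov X (nab.cov Y Z) - nab.cov Y (nab.cov X Z) - nab.cov ⁅X, Y⁆ Z

/-- The covariant derivative along `X` of a scalar-valued map of one vector field
argument (e.g. a 1-form): `(∇_X θ)(Y) := X(θ(Y)) − θ(∇_X Y)`. -/
def covOne (X : VF) (θ : VF → Cinf) : VF → Cinf :=
  fun Y => X (θ Y) - θ (nab.cov X Y)

/-- The covariant derivative `(∇_X T)(Y,Z) := ∇_X(T(Y,Z)) − T(∇_X Y, Z) − T(Y, ∇_X Z)`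
of the torsion. -/
def covTorsion (X Y Z : VF) : VF :=
  nab.cov X (nab.torsion Y Z) - nab.torsion (nab.cov X Y) Z - nab.torsion Y (nab.cov X Z)

/-- The covariant derivative
`(∇_X R)(Y,Z)W := ∇_X(R(Y,Z)W) − R(∇_X Y,Z)W − R(Y,∇_X Z)W − R(Y,Z)(∇_X W)`
of the curvature. -/
def covCurv (X Y Z W : VF) : VF :=
  nab.cov X (nab.curv Y Z W) - nab.curv (nab.cov X Y) Z W - nab.curv Y (nab.cov X Z) W
    - nab.curv Y Z (nab.cov X W)

end LinearConnection

/-- The exterior derivative of a 1-form (given as a bare function on vector fields):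
`dα(X,Y) := X(α(Y)) − Y(α(X)) − α([X,Y])`. -/
def extD1 (α : VF → Cinf) (X Y : VF) : Cinf :=
  X (α Y) - Y (α X) - α ⁅X, Y⁆

/-- The exterior derivative of a 2-form (given as a bare function on vector fields):
`dβ(X,Y,Z) := X(β(Y,Z)) + Y(β(Z,X)) + Z(β(X,Y)) − β([X,Y],Z) − β([Y,Z],X) − β([Z,X],Y)`. -/
def extD2 (β : VF → VF → Cinf) (X Y Z : VF) : Cinf :=
  X (β Y Z) + Y (β Z X) + Z (β X Y) - β ⁅X, Y⁆ Z - β ⁅Y, Z⁆ X - β ⁅Z, X⁆ Y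

/-- Remove the entry at position `i` from a sequence. -/
def seqRemove {α : Type*} (i : ℕ) (X : ℕ → α) : ℕ → α :=
  fun k => if k < i then X k else X (k + 1)

/-- Prepend an entry to a sequence. -/
def seqCons {α : Type*} (v : α) (X : ℕ → α) : ℕ → α :=
  fun k => if k = 0 then v else X (k - 1)

/-- Extend a finite tuple of vector fields to a sequence (by zero). -/
def seqOf {α : Type*} [Zero α] {n : ℕ} (X : Fin n → α) : ℕ → α :=
  fun k => if h : k < n then X ⟨k, h⟩ else 0

/-- Evaluate a `p`-form (an alternating `C^∞(M)`-multilinear map on `p`-tuples of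
vector fields) on the first `p` entries of a sequence of vector fields. -/
def seqApp (p : ℕ) (Θ : AlternatingMap Cinf VF Cinf (Fin p)) (X : ℕ → VF) : Cinf :=
  Θ fun k => X (k : ℕ)

namespace LinearConnection

variable (nab : LinearConnection I M)

/-- The covariant derivative along `W` of a `p`-form (given as a bare function on
sequences of vector fields, depending on the first `p` entries):
`(∇_W Θ)(Y_1,…,Y_p) := W(Θ(Y_1,…,Y_p)) − Σ_i Θ(Y_1,…,∇_W Y_i,…,Y_p)`. -/
def covSeq (p : ℕ) (W : VF) (F : (ℕ → VF) → Cinf) (X : ℕ → VF) : Cinf :=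
  W (F X) - ∑ k : Fin p, F (Function.update X (k : ℕ) (nab.cov W (X (k : ℕ))))

end LinearConnection

/-- The exterior derivative of a `p`-form (given as a bare function on sequences of
vector fields, depending on the first `p` entries), evaluated on the first `p+1`
entries of a sequence (zero-based indexing):
`dΘ(X_0,…,X_p) = Σ_i (−1)^i X_i(Θ(…,X̄_i,…)) + Σ_{i<j} (−1)^{i+j} Θ([X_i,X_j],…,X̄_i,…,X̄_j,…)`. -/
def extDSeq (p : ℕ) (F : (ℕ → VF) → Cinf) (X : ℕ → VF) : Cinf :=
  (∑ i : Fin (p + 1), (-1 : ℝ) ^ (i : ℕ) • (X (i : ℕ)) (F (seqRemove (i : ℕ) X)))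
  + ∑ i : Fin (p + 1), ∑ j : Fin (p + 1),
      if (i : ℕ) < (j : ℕ) then
        (-1 : ℝ) ^ ((i : ℕ) + (j : ℕ)) •
          F (seqCons ⁅X (i : ℕ), X (j : ℕ)⁆ (seqRemove (i : ℕ) (seqRemove (j : ℕ) X)))
      else 0

/-- `T_Θ` for a `p`-form `Θ` (zero-based indexing):
`T_Θ(X_0,…,X_p) := Σ_{i<j} (−1)^{i+j+1} Θ(T(X_i,X_j),X_0,…,X̄_i,…,X̄_j,…,X_p)`. -/
def torsionForm (nab : LinearConnection I M) (p : ℕ) (F : (ℕ → VF) → Cinf)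
    (X : ℕ → VF) : Cinf :=
  ∑ i : Fin (p + 1), ∑ j : Fin (p + 1),
    if (i : ℕ) < (j : ℕ) then
      (-1 : ℝ) ^ ((i : ℕ) + (j : ℕ) + 1) •
        F (seqCons (nab.torsion (X (i : ℕ)) (X (j : ℕ)))
            (seqRemove (i : ℕ) (seqRemove (j : ℕ) X)))
    else 0

/-- `Ξ_Θ` for a `p`-form `Θ` (zero-based indexing):
`Ξ_Θ(X_0,…,X_p) := Σ_i (−1)^{i+1} (∇_{X_i}Θ)(X_0,…,X̄_i,…,X_p)`. -/
def xiForm (nab : LinearConnection I M) (p : ℕ) (F : (ℕ → VF) → Cinf)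
    (X : ℕ → VF) : Cinf :=
  ∑ i : Fin (p + 1),
    (-1 : ℝ) ^ ((i : ℕ) + 1) • nab.covSeq p (X (i : ℕ)) F (seqRemove (i : ℕ) X)


/-! ### Auxiliary lemmas for the first structure equation -/

private lemma seqRemove_seqRemove {α : Type*} (i k : ℕ) (h : i ≤ k) (Y : ℕ → α) :
    seqRemove k (seqRemove i Y) = seqRemove i (seqRemove (k + 1) Y) := by
  funext m
  simp only [seqRemove]
  split_ifs <;> first | rfl | contradiction | (congr 1; omega) | omega

private lemma seqApp_update (q : ℕ) (Θ : AlternatingMap Cinf VF Cinf (Fin (q + 1)))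
    (m : Fin (q + 1)) (v : VF) (Y : ℕ → VF) :
    seqApp (q + 1) Θ (Function.update Y (m : ℕ) v) =
      (-1 : ℝ) ^ (m : ℕ) • seqApp (q + 1) Θ (seqCons v (seqRemove (m : ℕ) Y)) := by
  have key : (fun k : Fin (q + 1) => Function.update Y (m : ℕ) v (k : ℕ))
      = (fun k : Fin (q + 1) => seqCons v (seqRemove (m : ℕ) Y) (k : ℕ))
        ∘ ⇑(Fin.cycleRange m) := by
    funext k
    simp only [Function.comp_apply, Function.update_apply, seqCons, seqRemove]
    rcases lt_trichotomy k m with h | h | h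
    · have hval : ((m.cycleRange k : Fin (q + 1)) : ℕ) = (k : ℕ) + 1 :=
        Fin.coe_cycleRange_of_lt h
      have hk : (k : ℕ) < (m : ℕ) := h
      rw [hval]
      split_ifs <;> first | rfl | contradiction | (congr 1; omega) | omega
    · have hval : ((m.cycleRange k : Fin (q + 1)) : ℕ) = 0 := by
        rw [Fin.cycleRange_of_eq h]; rfl
      have hk : (k : ℕ) = (m : ℕ) := by rw [h]
      rw [hval]
      split_ifs <;> first | rfl | contradiction | (congr 1; omega) | omega
    · have hval : ((m.cycleRange k : Fin (q + 1)) : ℕ) = (k : ℕ) := by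
        rw [Fin.cycleRange_of_gt h]
      have hk : (m : ℕ) < (k : ℕ) := h
      rw [hval]
      split_ifs <;> first | rfl | contradiction | (congr 1; omega) | omega
  have := Θ.map_perm (fun k : Fin (q + 1) => seqCons v (seqRemove (m : ℕ) Y) (k : ℕ))
    (Fin.cycleRange m)
  rw [seqApp, key, this, Fin.sign_cycleRange, seqApp]
  rcases Nat.even_or_odd (m : ℕ) with h | h
  · simp [h.neg_one_pow]
  · simp [h.neg_one_pow, Units.smul_def]

private lemma seqApp_seqCons (q : ℕ) (Θ : AlternatingMap Cinf VF Cinf (Fin (q + 1)))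
    (v : VF) (R : ℕ → VF) :
    seqApp (q + 1) Θ (seqCons v R) = Θ (Fin.cons v (fun k : Fin q => R (k : ℕ))) := by
  rw [seqApp]
  congr 1
  funext k
  induction k using Fin.cases with
  | zero => simp [seqCons]
  | succ j => simp [seqCons, Fin.val_succ]

private lemma seqApp_cons_sub3 (q : ℕ) (Θ : AlternatingMap Cinf VF Cinf (Fin (q + 1)))
    (a b c : VF) (R : ℕ → VF) :
    seqApp (q + 1) Θ (seqCons (a - b - c) R)
      = seqApp (q + 1) Θ (seqCons a R) - seqApp (q + 1) Θ (seqCons b R)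
        - seqApp (q + 1) Θ (seqCons c R) := by
  rw [seqApp_seqCons, seqApp_seqCons, seqApp_seqCons, seqApp_seqCons]
  have h0 : ∀ v : VF, (Fin.cons v (fun k : Fin q => R (k : ℕ)) : Fin (q + 1) → VF)
      = Function.update (Fin.cons a (fun k : Fin q => R (k : ℕ))) 0 v := by
    intro v; rw [Fin.update_cons_zero]
  rw [h0 (a - b - c), h0 a, h0 b, h0 c, AlternatingMap.map_update_sub,
    AlternatingMap.map_update_sub]
  simp only [Function.update_idem]

/-- The summand `(−1)^{a+b+[a<b]} Θ(∇_{X_a} X_b, X_0,…,X̄_{min},…,X̄_{max},…)`. -/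
private def hAux (nab : LinearConnection I M) (q : ℕ)
    (Θ : AlternatingMap Cinf VF Cinf (Fin (q + 1))) (Y : ℕ → VF)
    (a b : Fin (q + 1 + 1)) : Cinf :=
  (if (a : ℕ) < (b : ℕ) then (-1 : ℝ) ^ ((a : ℕ) + (b : ℕ) + 1)
    else (-1 : ℝ) ^ ((a : ℕ) + (b : ℕ))) •
    seqApp (q + 1) Θ (seqCons (nab.cov (Y (a : ℕ)) (Y (b : ℕ)))
      (seqRemove (min (a : ℕ) (b : ℕ)) (seqRemove (max (a : ℕ) (b : ℕ)) Y)))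

private lemma hAux_lt (nab : LinearConnection I M) (q : ℕ)
    (Θ : AlternatingMap Cinf VF Cinf (Fin (q + 1))) (Y : ℕ → VF)
    {a b : Fin (q + 1 + 1)} (hab : (a : ℕ) < (b : ℕ)) :
    hAux nab q Θ Y a b = (-1 : ℝ) ^ ((a : ℕ) + (b : ℕ) + 1) •
      seqApp (q + 1) Θ (seqCons (nab.cov (Y (a : ℕ)) (Y (b : ℕ)))
        (seqRemove (a : ℕ) (seqRemove (b : ℕ) Y))) := by
  rw [hAux, if_pos hab, min_eq_left hab.le, max_eq_right hab.le]

private lemma hAux_gt (nab : LinearConnection I M) (q : ℕ)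
    (Θ : AlternatingMap Cinf VF Cinf (Fin (q + 1))) (Y : ℕ → VF)
    {a b : Fin (q + 1 + 1)} (hba : (b : ℕ) < (a : ℕ)) :
    hAux nab q Θ Y a b = (-1 : ℝ) ^ ((a : ℕ) + (b : ℕ)) •
      seqApp (q + 1) Θ (seqCons (nab.cov (Y (a : ℕ)) (Y (b : ℕ)))
        (seqRemove (b : ℕ) (seqRemove (a : ℕ) Y))) := by
  rw [hAux, if_neg (by omega), min_eq_right hba.le, max_eq_left hba.le]

private lemma crux (nab : LinearConnection I M) (q : ℕ)
    (Θ : AlternatingMap Cinf VF Cinf (Fin (q + 1))) (Y : ℕ → VF)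
    (i : Fin (q + 1 + 1)) (k : Fin (q + 1)) :
    (-1 : ℝ) ^ ((i : ℕ) + (k : ℕ)) •
      seqApp (q + 1) Θ (seqCons (nab.cov (Y (i : ℕ)) (seqRemove (i : ℕ) Y (k : ℕ)))
        (seqRemove (k : ℕ) (seqRemove (i : ℕ) Y)))
      = hAux nab q Θ Y i (i.succAbove k) := by
  by_cases hk : (k : ℕ) < (i : ℕ)
  · have hj : ((i.succAbove k : Fin (q + 1 + 1)) : ℕ) = (k : ℕ) := by
      simp [Fin.succAbove, Fin.lt_def, hk]
    rw [hAux, hj, if_neg (by omega), min_eq_right hk.le, max_eq_left hk.le]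
    have hY : seqRemove (i : ℕ) Y (k : ℕ) = Y (k : ℕ) := by
      simp [seqRemove, hk]
    rw [hY]
  · push_neg at hk
    have hj : ((i.succAbove k : Fin (q + 1 + 1)) : ℕ) = (k : ℕ) + 1 := by
      simp [Fin.succAbove, Fin.lt_def, Nat.not_lt.2 hk]
    rw [hAux, hj, if_pos (by omega), min_eq_left (by omega), max_eq_right (by omega)]
    have hY : seqRemove (i : ℕ) Y (k : ℕ) = Y ((k : ℕ) + 1) := by
      simp [seqRemove, Nat.not_lt.2 hk]
    have hsgn : (-1 : ℝ) ^ ((i : ℕ) + ((k : ℕ) + 1) + 1) = (-1 : ℝ) ^ ((i : ℕ) + (k : ℕ)) := by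
      have : (i : ℕ) + ((k : ℕ) + 1) + 1 = (i : ℕ) + (k : ℕ) + 2 := by ring
      rw [this, pow_add, neg_one_sq, mul_one]
    rw [hY, hsgn, seqRemove_seqRemove (i : ℕ) (k : ℕ) hk Y]

private lemma key_lemma (nab : LinearConnection I M) (q : ℕ)
    (Θ : AlternatingMap Cinf VF Cinf (Fin (q + 1))) (Y : ℕ → VF) :
    torsionForm nab (q + 1) (seqApp (q + 1) Θ) Y =
      extDSeq (q + 1) (seqApp (q + 1) Θ) Y + xiForm nab (q + 1) (seqApp (q + 1) Θ) Y := by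
  have hT : torsionForm nab (q + 1) (seqApp (q + 1) Θ) Y =
      (∑ i : Fin (q + 1 + 1), ∑ j : Fin (q + 1 + 1),
        if (i : ℕ) < (j : ℕ) then
          (-1 : ℝ) ^ ((i : ℕ) + (j : ℕ)) •
            seqApp (q + 1) Θ (seqCons ⁅Y (i : ℕ), Y (j : ℕ)⁆
              (seqRemove (i : ℕ) (seqRemove (j : ℕ) Y)))
        else 0)
      + ∑ i : Fin (q + 1 + 1), ∑ j : Fin (q + 1 + 1),
          (if (i : ℕ) < (j : ℕ) then hAux nab q Θ Y i j + hAux nab q Θ Y j i else 0) := by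
    rw [torsionForm, ← Finset.sum_add_distrib]
    refine Finset.sum_congr rfl fun i _ => ?_
    rw [← Finset.sum_add_distrib]
    refine Finset.sum_congr rfl fun j _ => ?_
    by_cases hij : (i : ℕ) < (j : ℕ)
    · rw [if_pos hij, if_pos hij, if_pos hij, LinearConnection.torsion, seqApp_cons_sub3,
        hAux_lt nab q Θ Y hij, hAux_gt nab q Θ Y hij]
      have hs : (-1 : ℝ) ^ ((i : ℕ) + (j : ℕ) + 1) = -(-1 : ℝ) ^ ((i : ℕ) + (j : ℕ)) := by
        rw [pow_succ]; ring
      have hji : (j : ℕ) + (i : ℕ) = (i : ℕ) + (j : ℕ) := Nat.add_comm _ _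
      rw [hs, hji, neg_smul, neg_smul, smul_sub, smul_sub]
      abel
    · rw [if_neg hij, if_neg hij, if_neg hij, add_zero]
  have hXi : xiForm nab (q + 1) (seqApp (q + 1) Θ) Y =
      -(∑ i : Fin (q + 1 + 1), (-1 : ℝ) ^ (i : ℕ) •
          (Y (i : ℕ)) (seqApp (q + 1) Θ (seqRemove (i : ℕ) Y)))
      + ((∑ i : Fin (q + 1 + 1), ∑ j : Fin (q + 1 + 1), hAux nab q Θ Y i j)
          - ∑ i : Fin (q + 1 + 1), hAux nab q Θ Y i i) := by
    have hper : ∀ i : Fin (q + 1 + 1),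
        (-1 : ℝ) ^ ((i : ℕ) + 1) •
          nab.covSeq (q + 1) (Y (i : ℕ)) (seqApp (q + 1) Θ) (seqRemove (i : ℕ) Y)
        = -((-1 : ℝ) ^ (i : ℕ) •
            (Y (i : ℕ)) (seqApp (q + 1) Θ (seqRemove (i : ℕ) Y)))
          + ((∑ j : Fin (q + 1 + 1), hAux nab q Θ Y i j) - hAux nab q Θ Y i i) := by
      intro i
      have hsum : ∑ k : Fin (q + 1),
          (-1 : ℝ) ^ (i : ℕ) • seqApp (q + 1) Θ
            (Function.update (seqRemove (i : ℕ) Y) (k : ℕ)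
              (nab.cov (Y (i : ℕ)) (seqRemove (i : ℕ) Y (k : ℕ))))
          = (∑ j : Fin (q + 1 + 1), hAux nab q Θ Y i j) - hAux nab q Θ Y i i := by
        rw [Fin.sum_univ_succAbove (fun j => hAux nab q Θ Y i j) i]
        rw [add_sub_cancel_left]
        refine Finset.sum_congr rfl fun k _ => ?_
        rw [seqApp_update q Θ k _ (seqRemove (i : ℕ) Y), smul_smul, ← pow_add,
          crux nab q Θ Y i k]
      rw [LinearConnection.covSeq]
      have hs : (-1 : ℝ) ^ ((i : ℕ) + 1) = -(-1 : ℝ) ^ (i : ℕ) := by rw [pow_succ]; ring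
      rw [hs, neg_smul, smul_sub, Finset.smul_sum, hsum, neg_sub]
      abel
    rw [xiForm]
    rw [Finset.sum_congr rfl fun i _ => hper i, Finset.sum_add_distrib,
      Finset.sum_sub_distrib, Finset.sum_neg_distrib]
  have hij : (∑ i : Fin (q + 1 + 1), ∑ j : Fin (q + 1 + 1),
      (if (i : ℕ) < (j : ℕ) then hAux nab q Θ Y i j + hAux nab q Θ Y j i else 0))
      = (∑ i : Fin (q + 1 + 1), ∑ j : Fin (q + 1 + 1), hAux nab q Θ Y i j)
        - ∑ i : Fin (q + 1 + 1), hAux nab q Θ Y i i := by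
    have hsplit : ∀ i j : Fin (q + 1 + 1),
        (if (i : ℕ) < (j : ℕ) then hAux nab q Θ Y i j + hAux nab q Θ Y j i else 0)
        = (if (i : ℕ) < (j : ℕ) then hAux nab q Θ Y i j else 0)
          + (if (i : ℕ) < (j : ℕ) then hAux nab q Θ Y j i else 0) := by
      intro i j; split_ifs <;> simp
    calc (∑ i : Fin (q + 1 + 1), ∑ j : Fin (q + 1 + 1),
          (if (i : ℕ) < (j : ℕ) then hAux nab q Θ Y i j + hAux nab q Θ Y j i else 0))
        = (∑ i : Fin (q + 1 + 1), ∑ j : Fin (q + 1 + 1),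
            (if (i : ℕ) < (j : ℕ) then hAux nab q Θ Y i j else 0))
          + ∑ i : Fin (q + 1 + 1), ∑ j : Fin (q + 1 + 1),
              (if (i : ℕ) < (j : ℕ) then hAux nab q Θ Y j i else 0) := by
          simp_rw [hsplit]; rw [← Finset.sum_add_distrib]
          exact Finset.sum_congr rfl fun i _ => Finset.sum_add_distrib
      _ = (∑ i : Fin (q + 1 + 1), ∑ j : Fin (q + 1 + 1),
            (if (i : ℕ) < (j : ℕ) then hAux nab q Θ Y i j else 0))
          + ∑ i : Fin (q + 1 + 1), ∑ j : Fin (q + 1 + 1),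
              (if (j : ℕ) < (i : ℕ) then hAux nab q Θ Y i j else 0) := by
          rw [Finset.sum_comm (f := fun i j : Fin (q + 1 + 1) =>
            (if (i : ℕ) < (j : ℕ) then hAux nab q Θ Y j i else 0))]
      _ = ∑ i : Fin (q + 1 + 1), ∑ j : Fin (q + 1 + 1),
            (hAux nab q Θ Y i j - if i = j then hAux nab q Θ Y i j else 0) := by
          rw [← Finset.sum_add_distrib]
          refine Finset.sum_congr rfl fun i _ => ?_
          rw [← Finset.sum_add_distrib]
          refine Finset.sum_congr rfl fun j _ => ?_
          rcases lt_trichotomy ((i : ℕ)) ((j : ℕ)) with h | h | h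
          · rw [if_pos h, if_neg (by omega), if_neg (by rintro rfl; omega)]; simp
          · have : i = j := Fin.ext h
            subst this; simp
          · rw [if_neg (by omega), if_pos h, if_neg (by rintro rfl; omega)]; simp
      _ = (∑ i : Fin (q + 1 + 1), ∑ j : Fin (q + 1 + 1), hAux nab q Θ Y i j)
          - ∑ i : Fin (q + 1 + 1), hAux nab q Θ Y i i := by
          rw [← Finset.sum_sub_distrib]
          refine Finset.sum_congr rfl fun i _ => ?_
          rw [Finset.sum_sub_distrib, Finset.sum_ite_eq]
          simp
  rw [hT, hXi, hij, extDSeq]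
  abel

/-- **Generalized first structure equation.** For every `p`-form `Θ` and vector fields
`X_0,…,X_p`: `T_Θ(X_0,…,X_p) = dΘ(X_0,…,X_p) + Ξ_Θ(X_0,…,X_p)`. -/
theorem first_structure_equation_p_form (nab : LinearConnection I M) (p : ℕ)
    (Θ : AlternatingMap Cinf VF Cinf (Fin p)) (X : Fin (p + 1) → VF) :
    torsionForm nab p (seqApp p Θ) (seqOf X) =
      extDSeq p (seqApp p Θ) (seqOf X) + xiForm nab p (seqApp p Θ) (seqOf X) := by
  rcases p with _ | q
  · simp [torsionForm, extDSeq, xiForm, LinearConnection.covSeq]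
  · exact key_lemma nab q Θ (seqOf X)
end
end

section
/- For every smooth 1-form θ on M and all smooth vector fields X,Y,Z, dΞ_θ(X,Y,Z) = R_θ(X,Y,Z) + (∇_X θ)(T(Y,Z)) + (∇_Y θ)(T(Z,X)) + (∇_Z θ)(T(X,Y)). -/
open scoped Manifold

local notation "∞" => (⊤ : ℕ∞)

noncomputable section

variable {E : Type*} [NormedAddCommGroup E] [NormedSpace ℝ E]
  {H : Type*} [TopologicalSpace H]

variable {I : ModelWithCorners ℝ E H}
  {M : Type*} [TopologicalSpace M] [ChartedSpace H M] [IsManifold I ∞ M]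

/-- Smooth real-valued functions on `M`. -/
local notation "Cinf" => C^∞⟮I, M; ℝ⟯
/-- Smooth global vector fields on `M`, as derivations of `C^∞(M)`. -/
local notation "VF" => Derivation ℝ C^∞⟮I, M; ℝ⟯ C^∞⟮I, M; ℝ⟯

theorem cov_sub_right (nab : LinearConnection I M) (X A B : VF) :
    nab.cov X (A - B) = nab.cov X A - nab.cov X B := by
  have h : A - B = A + (-1 : ℝ) • B := by module
  rw [h, nab.add_right, nab.smul_real_right]; module

/-- `dΞ_θ(X,Y,Z) = R_θ(X,Y,Z) + (∇_X θ)(T(Y,Z)) + (∇_Y θ)(T(Z,X)) + (∇_Z θ)(T(X,Y))`,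
where `Ξ_θ(X,Y) := (∇_Y θ)(X) − (∇_X θ)(Y)`. -/
theorem extD_Xi_eq_curvature_plus_torsion_terms (nab : LinearConnection I M)
    (θ : VF →ₗ[Cinf] Cinf) (X Y Z : VF) :
    extD2 (fun A B => nab.covOne B (⇑θ) A - nab.covOne A (⇑θ) B) X Y Z =
      (θ (nab.curv X Y Z) + θ (nab.curv Y Z X) + θ (nab.curv Z X Y))
        + nab.covOne X (⇑θ) (nab.torsion Y Z)
        + nab.covOne Y (⇑θ) (nab.torsion Z X)
        + nab.covOne Z (⇑θ) (nab.torsion X Y) := by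
  simp only [extD2, LinearConnection.covOne, LinearConnection.torsion, LinearConnection.curv,
    cov_sub_right, map_sub, map_add, Derivation.commutator_apply]
  ring
end
end

section
/- For every smooth 1-form θ on M and all smooth vector fields X,Y,Z,W, θ((d^∇R)(X,Y,Z)W) = d(R_{θ,W} − Ψ_{θ,W})(X,Y,Z), where (d^∇R)(X,Y,Z)W := Σ_cyc [∇_X(R(Y,Z)W) − R(Y,Z)(∇_X W)] − Σ_cyc R([X,Y],Z)W is the exterior covariant derivative of the endomorphism-valued curvature 2-form, and each Σ_cyc denotes the sum over the cyclic permutations (X,Y,Z), (Y,Z,X), (Z,X,Y). -/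
open scoped Manifold

local notation "∞" => (⊤ : ℕ∞)

noncomputable section

variable {E : Type*} [NormedAddCommGroup E] [NormedSpace ℝ E]
  {H : Type*} [TopologicalSpace H]

variable {I : ModelWithCorners ℝ E H}
  {M : Type*} [TopologicalSpace M] [ChartedSpace H M] [IsManifold I ∞ M]

/-- Smooth real-valued functions on `M`. -/
local notation "Cinf" => C^∞⟮I, M; ℝ⟯
/-- Smooth global vector fields on `M`, as derivations of `C^∞(M)`. -/
local notation "VF" => Derivation ℝ C^∞⟮I, M; ℝ⟯ C^∞⟮I, M; ℝ⟯

/-- `θ((d^∇R)(X,Y,Z)W) = d(R_{θ,W} − Ψ_{θ,W})(X,Y,Z)`, where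
`(d^∇R)(X,Y,Z)W := Σ_cyc [∇_X(R(Y,Z)W) − R(Y,Z)(∇_X W)] − Σ_cyc R([X,Y],Z)W` is the
exterior covariant derivative of the (endomorphism-valued) curvature 2-form. -/
theorem ext_cov_deriv_curvature (nab : LinearConnection I M)
    (θ : VF →ₗ[Cinf] Cinf) (X Y Z W : VF) :
    θ ((nab.cov X (nab.curv Y Z W) - nab.curv Y Z (nab.cov X W))
        + (nab.cov Y (nab.curv Z X W) - nab.curv Z X (nab.cov Y W))
        + (nab.cov Z (nab.curv X Y W) - nab.curv X Y (nab.cov Z W))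
        - nab.curv ⁅X, Y⁆ Z W - nab.curv ⁅Y, Z⁆ X W - nab.curv ⁅Z, X⁆ Y W) =
      extD2 (fun A B => θ (nab.curv A B W)
          - (nab.covOne B (⇑θ) (nab.cov A W) - nab.covOne A (⇑θ) (nab.cov B W))) X Y Z := by
  have hsubl : ∀ (A B C : VF), nab.cov (A - B) C = nab.cov A C - nab.cov B C := by
    intro A B C
    rw [sub_eq_add_neg, ← neg_one_smul ℝ B, nab.add_left, nab.smul_real_left]
    module
  have hnegl : ∀ (A C : VF), nab.cov (-A) C = -nab.cov A C := by
    intro A C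
    rw [← neg_one_smul ℝ A, nab.smul_real_left]
    module
  have hsubr : ∀ (A B C : VF), nab.cov A (B - C) = nab.cov A B - nab.cov A C := by
    intro A B C
    rw [sub_eq_add_neg, ← neg_one_smul ℝ C, nab.add_right, nab.smul_real_right]
    module
  have hj1 : (⁅⁅X, Y⁆, Z⁆ : VF) = -⁅⁅Y, Z⁆, X⁆ - ⁅⁅Z, X⁆, Y⁆ := by
    ext f
    simp only [Derivation.commutator_apply, Derivation.sub_apply, Derivation.neg_apply, map_sub]
    ring_nf
  simp only [extD2, LinearConnection.curv, LinearConnection.covOne]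
  rw [hj1]
  simp only [hsubl, hnegl, hsubr, map_sub, map_add, map_neg, Derivation.commutator_apply]
  abel
end
end

section
/- Cartan's second Bianchi identity: for all indices a,b and all smooth vector fields X,Y,Z, dΩ^a_b(X,Y,Z) + Σ_c (ω^a_c ∧ Ω^c_b)(X,Y,Z) = Σ_c (Ω^a_c ∧ ω^c_b)(X,Y,Z). -/
open scoped Manifold

local notation "∞" => (⊤ : ℕ∞)

noncomputable section

variable {E : Type*} [NormedAddCommGroup E] [NormedSpace ℝ E]
  {H : Type*} [TopologicalSpace H]

variable {I : ModelWithCorners ℝ E H}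
  {M : Type*} [TopologicalSpace M] [ChartedSpace H M] [IsManifold I ∞ M]

/-- Smooth real-valued functions on `M`. -/
local notation "Cinf" => C^∞⟮I, M; ℝ⟯
/-- Smooth global vector fields on `M`, as derivations of `C^∞(M)`. -/
local notation "VF" => Derivation ℝ C^∞⟮I, M; ℝ⟯ C^∞⟮I, M; ℝ⟯

namespace LinearConnection

variable (nab : LinearConnection I M)

lemma cov_zero_right (X : VF) : nab.cov X (0 : VF) = 0 := by
  simpa using nab.smul_real_right 0 X 0

lemma cov_neg_right (X Y : VF) : nab.cov X (-Y) = -nab.cov X Y := by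
  rw [← neg_one_smul ℝ Y, nab.smul_real_right]; module

lemma cov_sub_right (X Y Y' : VF) : nab.cov X (Y - Y') = nab.cov X Y - nab.cov X Y' := by
  rw [sub_eq_add_neg, nab.add_right, nab.cov_neg_right, ← sub_eq_add_neg]

lemma cov_neg_left (X Y : VF) : nab.cov (-X) Y = -nab.cov X Y := by
  rw [← neg_one_smul ℝ X, nab.smul_real_left]; module

lemma cov_sub_left (X X' Y : VF) : nab.cov (X - X') Y = nab.cov X Y - nab.cov X' Y := by
  rw [sub_eq_add_neg, nab.add_left, nab.cov_neg_left, ← sub_eq_add_neg]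

lemma cov_sum_right {ι : Type*} (X : VF) (s : Finset ι) (V : ι → VF) :
    nab.cov X (∑ c ∈ s, V c) = ∑ c ∈ s, nab.cov X (V c) := by
  classical
  induction s using Finset.cons_induction with
  | empty => simpa using nab.cov_zero_right X
  | cons c s hc ih => rw [Finset.sum_cons, nab.add_right, ih, Finset.sum_cons]

lemma curv_smul_right (X Y : VF) (f : Cinf) (W : VF) :
    nab.curv X Y (f • W) = f • nab.curv X Y W := by
  simp only [curv, nab.leibniz, nab.add_right, Derivation.commutator_apply, sub_smul,
    smul_sub]
  module

lemma curv_sum_right {ι : Type*} (X Y : VF) (s : Finset ι) (V : ι → VF) :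
    nab.curv X Y (∑ c ∈ s, V c) = ∑ c ∈ s, nab.curv X Y (V c) := by
  simp only [curv, nab.cov_sum_right, Finset.sum_sub_distrib]

lemma bianchi (X Y Z W : VF) :
    nab.cov X (nab.curv Y Z W) + nab.cov Y (nab.curv Z X W) + nab.cov Z (nab.curv X Y W)
      - nab.curv ⁅X, Y⁆ Z W - nab.curv ⁅Y, Z⁆ X W - nab.curv ⁅Z, X⁆ Y W =
    nab.curv X Y (nab.cov Z W) + nab.curv Y Z (nab.cov X W)
      + nab.curv Z X (nab.cov Y W) := by
  have hjac : ⁅⁅Z, X⁆, Y⁆ = -⁅⁅X, Y⁆, Z⁆ - ⁅⁅Y, Z⁆, X⁆ := by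
    have h := lie_jacobi Y Z X
    have h1 : ⁅⁅Z, X⁆, Y⁆ = -⁅Y, ⁅Z, X⁆⁆ := (neg_eq_iff_eq_neg.mpr (lie_skew _ _).symm).symm
    have h2 : ⁅⁅X, Y⁆, Z⁆ = -⁅Z, ⁅X, Y⁆⁆ := (neg_eq_iff_eq_neg.mpr (lie_skew _ _).symm).symm
    have h3 : ⁅⁅Y, Z⁆, X⁆ = -⁅X, ⁅Y, Z⁆⁆ := (neg_eq_iff_eq_neg.mpr (lie_skew _ _).symm).symm
    rw [h1, h2, h3]
    linear_combination (norm := abel) -h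
  simp only [curv, nab.cov_sub_right, hjac, nab.cov_sub_left, nab.cov_neg_left]
  abel

end LinearConnection

/-- **Cartan's second Bianchi identity.** For a frame `U_1,…,U_n` with dual coframe
`θ^1,…,θ^n`: `dΩ^a_b + Σ_c ω^a_c ∧ Ω^c_b = Σ_c Ω^a_c ∧ ω^c_b`, where
`ω^a_b(X) := θ^a(∇_X U_b)` and `Ω^a_b(X,Y) := θ^a(R(X,Y)U_b)`,
`(α ∧ β)(X,Y,Z) := α(X)β(Y,Z) + α(Y)β(Z,X) + α(Z)β(X,Y)` for a 1-form `α` and 2-form `β`,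
and `(β ∧ α)(X,Y,Z) := β(X,Y)α(Z) + β(Y,Z)α(X) + β(Z,X)α(Y)`. -/
theorem cartan_second_bianchi (nab : LinearConnection I M) {n : ℕ}
    (U : Fin n → VF) (θf : Fin n → (VF →ₗ[Cinf] Cinf))
    (hdual : ∀ a b, θf a (U b) = if a = b then 1 else 0)
    (hframe : ∀ X : VF, X = ∑ a, θf a X • U a)
    (a b : Fin n) (X Y Z : VF) :
    extD2 (fun A B => θf a (nab.curv A B (U b))) X Y Z
      + ∑ c, (θf a (nab.cov X (U c)) * θf c (nab.curv Y Z (U b))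
          + θf a (nab.cov Y (U c)) * θf c (nab.curv Z X (U b))
          + θf a (nab.cov Z (U c)) * θf c (nab.curv X Y (U b))) =
    ∑ c, (θf a (nab.curv X Y (U c)) * θf c (nab.cov Z (U b))
        + θf a (nab.curv Y Z (U c)) * θf c (nab.cov X (U b))
        + θf a (nab.curv Z X (U c)) * θf c (nab.cov Y (U b))) := by
  classical
  have key : ∀ (X V : VF),
      X (θf a V) = θf a (nab.cov X V)
        - ∑ c, θf a (nab.cov X (U c)) * θf c V := by
    intro X V
    have h0 : nab.cov X V = ∑ c, (X (θf c V) • U c + θf c V • nab.cov X (U c)) := by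
      conv_lhs => rw [hframe V]
      rw [nab.cov_sum_right]
      exact Finset.sum_congr rfl fun c _ => nab.leibniz _ _ _
    have h2 := congrArg (θf a) h0
    simp only [map_sum, map_add, map_smul, smul_eq_mul, hdual, mul_ite, mul_one, mul_zero,
      Finset.sum_add_distrib, Finset.sum_ite_eq, Finset.mem_univ, if_true] at h2
    rw [h2, Finset.sum_congr rfl fun c _ => mul_comm (θf a (nab.cov X (U c))) (θf c V)]
    ring
  have tens : ∀ (X Y : VF) (V : VF),
      ∑ c, θf a (nab.curv X Y (U c)) * θf c V = θf a (nab.curv X Y V) := by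
    intro X Y V
    conv_rhs => rw [hframe V]
    rw [nab.curv_sum_right, map_sum]
    exact Finset.sum_congr rfl fun c _ => by
      rw [nab.curv_smul_right, map_smul, smul_eq_mul, mul_comm]
  have hb := congrArg (θf a) (nab.bianchi X Y Z (U b))
  simp only [map_add, map_sub] at hb
  simp only [extD2, key]
  simp only [Finset.sum_add_distrib]
  rw [tens X Y (nab.cov Z (U b)), tens Y Z (nab.cov X (U b)), tens Z X (nab.cov Y (U b))]
  linear_combination hb
end
end
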